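/- Let n ≥ 2, let A be a real n×n singular irreducible M-matrix, and let U_G be the FSAI upper triangular factor associated with an admissible pattern S_U. Then U_G is entrywise nonnegative and nonsingular (invertible). -/

import Mathlib

open Matrix

/-- The spectral radius of a real matrix: the maximum modulus of its complex
eigenvalues (supremum of moduli of elements of the complex spectrum). -/
noncomputable def specRad {n : ℕ} (B : Matrix (Fin n) (Fin n) ℝ) : ℝ :=
  sSup ((fun z : ℂ => ‖z‖) '' spectrum ℂ (B.map Complex.ofReal))

/-- A real square matrix is a Z-matrix if its off-diagonal entries are nonpositive. -/
def IsZMatrix {n : ℕ} (A : Matrix (Fin n) (Fin n) ℝ) : Prop :=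
  ∀ i j, i ≠ j → A i j ≤ 0

/-- A Z-matrix `A` is a nonsingular M-matrix if `A = s • 1 - B` with `B`
entrywise nonnegative and `s > ρ(B)`. -/
def IsNonsingularMMatrix {n : ℕ} (A : Matrix (Fin n) (Fin n) ℝ) : Prop :=
  IsZMatrix A ∧ ∃ (s : ℝ) (B : Matrix (Fin n) (Fin n) ℝ),
    (∀ i j, 0 ≤ B i j) ∧ specRad B < s ∧ A = s • (1 : Matrix (Fin n) (Fin n) ℝ) - B

/-- A Z-matrix `A` is a singular M-matrix if `A = ρ(B) • 1 - B` with `B`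
entrywise nonnegative. -/
def IsSingularMMatrix {n : ℕ} (A : Matrix (Fin n) (Fin n) ℝ) : Prop :=
  IsZMatrix A ∧ ∃ B : Matrix (Fin n) (Fin n) ℝ,
    (∀ i j, 0 ≤ B i j) ∧ A = specRad B • (1 : Matrix (Fin n) (Fin n) ℝ) - B

/-- A matrix is irreducible if its directed graph (edge `i → j` iff `A i j ≠ 0`)
is strongly connected. -/
def IsIrreducibleMatrix {n : ℕ} (A : Matrix (Fin n) (Fin n) ℝ) : Prop :=
  ∀ i j : Fin n, Relation.ReflTransGen (fun a b : Fin n => A a b ≠ 0) i j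

/-- Lower triangular real matrix. -/
def IsLowerTri {n : ℕ} (L : Matrix (Fin n) (Fin n) ℝ) : Prop :=
  ∀ i j : Fin n, i < j → L i j = 0

/-- Upper triangular real matrix. -/
def IsUpperTri {n : ℕ} (U : Matrix (Fin n) (Fin n) ℝ) : Prop :=
  ∀ i j : Fin n, j < i → U i j = 0

/-- `L` is an FSAI lower triangular factor of `A` for the pattern `S`:
`L` is lower triangular, vanishes off the pattern, and `(L * A) i j = δ i j`
on the pattern. -/
def IsFSAILowerFactor {n : ℕ} (A L : Matrix (Fin n) (Fin n) ℝ)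
    (S : Set (Fin n × Fin n)) : Prop :=
  IsLowerTri L ∧ (∀ p : Fin n × Fin n, p ∉ S → L p.1 p.2 = 0) ∧
    ∀ p : Fin n × Fin n, p ∈ S → (L * A) p.1 p.2 = if p.1 = p.2 then 1 else 0

/-- `U` is an FSAI upper triangular factor of `A` for the pattern `S`:
`U` is upper triangular, vanishes off the pattern, and `(A * U) i j = δ i j`
on the pattern. -/
def IsFSAIUpperFactor {n : ℕ} (A U : Matrix (Fin n) (Fin n) ℝ)
    (S : Set (Fin n × Fin n)) : Prop :=
  IsUpperTri U ∧ (∀ p : Fin n × Fin n, p ∉ S → U p.1 p.2 = 0) ∧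
    ∀ p : Fin n × Fin n, p ∈ S → (A * U) p.1 p.2 = if p.1 = p.2 then 1 else 0


set_option linter.unusedSectionVars false
set_option maxHeartbeats 1000000
open Matrix Filter
open scoped ENNReal NNReal

section Aux
variable {ι : Type*} [Fintype ι] [DecidableEq ι]

lemma entrywise_pow_nonneg {M : Matrix ι ι ℝ} (hM : ∀ a b, 0 ≤ M a b) :
    ∀ (k : ℕ) (a b : ι), 0 ≤ (M ^ k) a b := by
  intro k
  induction k with
  | zero =>
    intro a b
    rw [pow_zero, Matrix.one_apply]
    split <;> norm_num
  | succ k ih =>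
    intro a b
    rw [pow_succ, Matrix.mul_apply]
    exact Finset.sum_nonneg fun l _ => mul_nonneg (ih a l) (hM l b)

lemma mulVec_nonneg' {M : Matrix ι ι ℝ} (hM : ∀ a b, 0 ≤ M a b) {v : ι → ℝ}
    (hv : ∀ i, 0 ≤ v i) : ∀ i, 0 ≤ (M *ᵥ v) i :=
  fun i => Finset.sum_nonneg fun l _ => mul_nonneg (hM i l) (hv l)

lemma mulVec_mono' {M : Matrix ι ι ℝ} (hM : ∀ a b, 0 ≤ M a b) {u v : ι → ℝ}
    (huv : ∀ i, u i ≤ v i) : ∀ i, (M *ᵥ u) i ≤ (M *ᵥ v) i :=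
  fun i => Finset.sum_le_sum fun l _ => mul_le_mul_of_nonneg_left (huv l) (hM i l)

lemma map_ofReal_pow (M : Matrix ι ι ℝ) (k : ℕ) :
    (M.map Complex.ofReal) ^ k = (M ^ k).map Complex.ofReal := by
  induction k with
  | zero =>
    ext a b
    simp [Matrix.one_apply, Matrix.map_apply, apply_ite Complex.ofReal]
  | succ k ih =>
    rw [pow_succ, pow_succ, ih]
    ext a b
    simp only [Matrix.mul_apply, Matrix.map_apply]
    push_cast
    rfl

end Aux

section Norm
variable {ι : Type*} [Fintype ι] [DecidableEq ι] [Nonempty ι]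

attribute [local instance] Matrix.linftyOpNormedAddCommGroup Matrix.linftyOpNormedRing
  Matrix.linftyOpNormedAlgebra

lemma rowsum_le_nnnorm (X : Matrix ι ι ℂ) (a : ι) : ∑ b, ‖X a b‖₊ ≤ ‖X‖₊ := by
  rw [Matrix.linfty_opNNNorm_def]
  exact Finset.le_sup (f := fun i => ∑ j, ‖X i j‖₊) (Finset.mem_univ a)

lemma entry_norm_le (X : Matrix ι ι ℂ) (a b : ι) : ‖X a b‖ ≤ ‖X‖ := by
  have h1 : ‖X a b‖₊ ≤ ‖X‖₊ :=
    le_trans (Finset.single_le_sum (f := fun c => ‖X a c‖₊) (fun _ _ => zero_le)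
      (Finset.mem_univ b)) (rowsum_le_nnnorm X a)
  exact_mod_cast h1

end Norm

section Gelfand
variable {ι : Type*} [Fintype ι] [DecidableEq ι] [Nonempty ι]

attribute [local instance] Matrix.linftyOpNormedAddCommGroup Matrix.linftyOpNormedRing
  Matrix.linftyOpNormedAlgebra

lemma gelfand_lower (M : Matrix ι ι ℝ) (hM : ∀ a b, 0 ≤ M a b) {c : ℝ} (hc : 0 ≤ c)
    {z : ι → ℝ} (hz : ∀ i, 0 < z i) (hle : ∀ i, c * z i ≤ (M *ᵥ z) i) :
    ENNReal.ofReal c ≤ spectralRadius ℂ (M.map Complex.ofReal) := by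
  rcases eq_or_lt_of_le hc with rfl | hc0
  · simp
  set Mc := M.map Complex.ofReal with hMc
  have hune : (Finset.univ : Finset ι).Nonempty := Finset.univ_nonempty
  set zmin := Finset.univ.inf' hune z with hzmindef
  set zmax := Finset.univ.sup' hune z with hzmaxdef
  have hzmin : 0 < zmin := (Finset.lt_inf'_iff _).2 fun i _ => hz i
  have hzmax : 0 < zmax :=
    lt_of_lt_of_le (hz (Classical.arbitrary ι)) (Finset.le_sup' z (Finset.mem_univ _))
  set q := zmin / zmax with hq
  have hq0 : 0 < q := div_pos hzmin hzmax
  have hvec : ∀ (k : ℕ) (i : ι), c ^ k * z i ≤ ((M ^ k) *ᵥ z) i := by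
    intro k
    induction k with
    | zero => intro i; simp [Matrix.one_mulVec]
    | succ k ih =>
      intro i
      calc c ^ (k + 1) * z i = c ^ k * (c * z i) := by ring
        _ ≤ c ^ k * (M *ᵥ z) i :=
            mul_le_mul_of_nonneg_left (hle i) (pow_nonneg hc k)
        _ = (M *ᵥ (c ^ k • z)) i := by
            rw [Matrix.mulVec_smul]; simp [smul_eq_mul]
        _ ≤ (M *ᵥ ((M ^ k) *ᵥ z)) i := by
            refine mulVec_mono' hM (fun l => ?_) i
            simpa [smul_eq_mul] using ih l
        _ = ((M ^ (k + 1)) *ᵥ z) i := by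
            rw [Matrix.mulVec_mulVec, ← pow_succ']
  have hnorm : ∀ k : ℕ, ENNReal.ofReal (c ^ k * q) ≤ ((‖Mc ^ k‖₊ : ℝ≥0∞)) := by
    intro k
    obtain ⟨i⟩ := (inferInstance : Nonempty ι)
    have hrow : c ^ k * zmin ≤ (∑ b, (M ^ k) i b) * zmax := by
      calc c ^ k * zmin ≤ c ^ k * z i :=
            mul_le_mul_of_nonneg_left (Finset.inf'_le z (Finset.mem_univ i)) (pow_nonneg hc k)
        _ ≤ ((M ^ k) *ᵥ z) i := hvec k i
        _ ≤ ∑ b, (M ^ k) i b * zmax :=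
            Finset.sum_le_sum fun b _ =>
              mul_le_mul_of_nonneg_left (Finset.le_sup' z (Finset.mem_univ b))
                (entrywise_pow_nonneg hM k i b)
        _ = (∑ b, (M ^ k) i b) * zmax := (Finset.sum_mul _ _ _).symm
    have hsum : c ^ k * q ≤ ∑ b, (M ^ k) i b := by
      rw [hq, ← mul_div_assoc, div_le_iff₀ hzmax]
      exact hrow
    have hsum' : (∑ b, (M ^ k) i b) ≤ ‖Mc ^ k‖ := by
      have he : ∀ b, (M ^ k) i b = ‖(Mc ^ k) i b‖ := by
        intro b
        rw [hMc, map_ofReal_pow, Matrix.map_apply, Complex.norm_real, Real.norm_eq_abs,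
          abs_of_nonneg (entrywise_pow_nonneg hM k i b)]
      calc (∑ b, (M ^ k) i b) = ∑ b, ‖(Mc ^ k) i b‖ := Finset.sum_congr rfl fun b _ => he b
        _ ≤ ‖Mc ^ k‖ := by
            have := rowsum_le_nnnorm (Mc ^ k) i
            have h2 : ((∑ b, ‖(Mc ^ k) i b‖₊ : ℝ≥0) : ℝ) ≤ ((‖Mc ^ k‖₊ : ℝ≥0) : ℝ) := by
              exact_mod_cast this
            simpa [NNReal.coe_sum] using h2
    calc ENNReal.ofReal (c ^ k * q) ≤ ENNReal.ofReal ‖Mc ^ k‖ :=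
          ENNReal.ofReal_le_ofReal (hsum.trans hsum')
      _ = ((‖Mc ^ k‖₊ : ℝ≥0∞)) := ofReal_norm _
  have hlim1 : Filter.Tendsto (fun k : ℕ => ENNReal.ofReal (c * q ^ (1 / (k : ℝ))))
      Filter.atTop (nhds (ENNReal.ofReal c)) := by
    have h1 : Filter.Tendsto (fun k : ℕ => 1 / (k : ℝ)) Filter.atTop (nhds 0) :=
      tendsto_one_div_atTop_nhds_zero_nat
    have h2 : Filter.Tendsto (fun k : ℕ => q ^ (1 / (k : ℝ))) Filter.atTop (nhds 1) := by
      have h3 : Filter.Tendsto (fun k : ℕ => Real.exp (Real.log q * (1 / (k : ℝ))))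
          Filter.atTop (nhds (Real.exp (Real.log q * 0))) :=
        (Real.continuous_exp.tendsto _).comp (h1.const_mul _)
      simpa [Real.rpow_def_of_pos hq0, mul_zero, Real.exp_zero] using h3
    have h4 : Filter.Tendsto (fun k : ℕ => c * q ^ (1 / (k : ℝ))) Filter.atTop (nhds (c * 1)) :=
      h2.const_mul c
    rw [mul_one] at h4
    exact (ENNReal.continuous_ofReal.tendsto _).comp h4
  have hGel := spectrum.pow_nnnorm_pow_one_div_tendsto_nhds_spectralRadius Mc
  refine le_of_tendsto_of_tendsto hlim1 hGel ?_
  filter_upwards [Filter.eventually_ge_atTop 1] with k hk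
  have hk0 : (k : ℝ) ≠ 0 := Nat.cast_ne_zero.2 (by omega)
  have e1 : ENNReal.ofReal (c * q ^ (1 / (k : ℝ))) =
      (ENNReal.ofReal (c ^ k * q)) ^ (1 / (k : ℝ)) := by
    rw [ENNReal.ofReal_rpow_of_pos (by positivity)]
    congr 1
    rw [Real.mul_rpow (by positivity) hq0.le, ← Real.rpow_natCast c k,
      ← Real.rpow_mul hc0.le, mul_one_div, div_self hk0, Real.rpow_one]
  rw [e1]
  exact ENNReal.rpow_le_rpow (hnorm k) (by positivity)

end Gelfand

section Neumann
variable {ι : Type*} [Fintype ι] [DecidableEq ι] [Nonempty ι]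

attribute [local instance] Matrix.linftyOpNormedAddCommGroup Matrix.linftyOpNormedRing
  Matrix.linftyOpNormedAlgebra

lemma neumann_inverse (M : Matrix ι ι ℝ) (hM : ∀ a b, 0 ≤ M a b) {r : ℝ} (hr : 0 < r)
    (hspec : ∀ μ ∈ spectrum ℂ (M.map Complex.ofReal), ‖μ‖ < r) :
    ∃ N : Matrix ι ι ℝ, (r • (1 : Matrix ι ι ℝ) - M) * N = 1 ∧
      N * (r • (1 : Matrix ι ι ℝ) - M) = 1 ∧ (∀ a b, 0 ≤ N a b) ∧ ∀ a, 1 ≤ r * N a a := by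
  classical
  set Mc := M.map Complex.ofReal with hMc
  have hρ : spectralRadius ℂ Mc < ENNReal.ofReal r := by
    have h1 := spectrum.spectralRadius_lt_of_forall_lt (a := Mc) (r := r.toNNReal) ?_
    · simpa [ENNReal.ofReal] using h1
    · intro zz hzz
      have h2 : ‖zz‖ < r := hspec zz hzz
      have h3 : ((‖zz‖₊ : ℝ≥0) : ℝ) < ((r.toNNReal : ℝ≥0) : ℝ) := by
        rwa [coe_nnnorm, Real.coe_toNNReal _ hr.le]
      exact_mod_cast h3
  set t0 := (spectralRadius ℂ Mc).toReal with ht0def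
  have hρne : spectralRadius ℂ Mc ≠ ⊤ := ne_top_of_lt hρ
  have ht0 : 0 ≤ t0 := ENNReal.toReal_nonneg
  have ht0r : t0 < r := by
    have h4 := (ENNReal.toReal_lt_toReal hρne (by simp : ENNReal.ofReal r ≠ ⊤)).2 hρ
    rwa [ENNReal.toReal_ofReal hr.le] at h4
  set r' := (t0 + r) / 2 with hr'def
  have hr'0 : 0 < r' := by rw [hr'def]; linarith
  have hr'r : r' < r := by rw [hr'def]; linarith
  have hρr' : spectralRadius ℂ Mc < ENNReal.ofReal r' := by
    have h5 : spectralRadius ℂ Mc = ENNReal.ofReal t0 := (ENNReal.ofReal_toReal hρne).symm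
    rw [h5]
    exact (ENNReal.ofReal_lt_ofReal_iff hr'0).2 (by rw [hr'def]; linarith)
  obtain ⟨K, hK⟩ := Filter.eventually_atTop.1
    ((spectrum.pow_nnnorm_pow_one_div_tendsto_nhds_spectralRadius Mc).eventually_lt_const hρr')
  set K' := max K 1 with hK'def
  have hbound : ∀ k, K' ≤ k → ∀ a b, (M ^ k) a b ≤ r' ^ k := by
    intro k hk a b
    have hk1 : 1 ≤ k := le_trans (le_max_right _ _) hk
    have hkc : ((k : ℝ)) ≠ 0 := Nat.cast_ne_zero.2 (by omega)
    have h1 : ((‖Mc ^ k‖₊ : ℝ≥0∞)) ^ (1 / (k : ℝ)) < ENNReal.ofReal r' :=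
      hK k (le_trans (le_max_left _ _) hk)
    have h2 : ((‖Mc ^ k‖₊ : ℝ≥0∞)) ≤ ENNReal.ofReal (r' ^ k) := by
      calc ((‖Mc ^ k‖₊ : ℝ≥0∞)) = (((‖Mc ^ k‖₊ : ℝ≥0∞)) ^ (1 / (k : ℝ))) ^ (k : ℝ) := by
            rw [← ENNReal.rpow_mul, one_div, inv_mul_cancel₀ hkc, ENNReal.rpow_one]
        _ ≤ (ENNReal.ofReal r') ^ (k : ℝ) := by
            refine ENNReal.rpow_le_rpow h1.le (by positivity)
        _ = ENNReal.ofReal (r' ^ k) := by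
            rw [ENNReal.ofReal_rpow_of_pos hr'0, Real.rpow_natCast]
    have h4 : ‖Mc ^ k‖ ≤ r' ^ k := by
      rw [← enorm_eq_nnnorm, ← ofReal_norm] at h2
      exact (ENNReal.ofReal_le_ofReal_iff (by positivity)).1 h2
    have h5 : (M ^ k) a b = ‖(Mc ^ k) a b‖ := by
      rw [hMc, map_ofReal_pow, Matrix.map_apply, Complex.norm_real, Real.norm_eq_abs,
        abs_of_nonneg (entrywise_pow_nonneg hM k a b)]
    rw [h5]
    exact (entry_norm_le _ a b).trans h4
  obtain ⟨t, htdef⟩ : ∃ t : ℝ, t = r' / r := ⟨_, rfl⟩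
  have ht0' : 0 ≤ t := by rw [htdef]; positivity
  have ht1 : t < 1 := by rw [htdef]; exact (div_lt_one hr).2 hr'r
  obtain ⟨g, hg⟩ : ∃ g : ℕ → Matrix ι ι ℝ, g = fun k => (r⁻¹ • M) ^ k := ⟨_, rfl⟩
  have hge : ∀ k a b, g k a b = r⁻¹ ^ k * (M ^ k) a b := by
    intro k a b
    rw [hg]
    simp only [smul_pow, Matrix.smul_apply, smul_eq_mul]
  have hgnn : ∀ k a b, 0 ≤ g k a b := fun k a b => by
    rw [hge]
    exact mul_nonneg (by positivity) (entrywise_pow_nonneg hM k a b)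
  have hsum : ∀ a b, Summable fun k => g k a b := by
    intro a b
    rw [← summable_nat_add_iff K']
    refine Summable.of_nonneg_of_le (fun k => hgnn _ a b) (f := fun k => t ^ K' * t ^ k) ?_
      ((summable_geometric_of_lt_one ht0' ht1).mul_left _)
    intro k
    rw [hge]
    calc r⁻¹ ^ (k + K') * (M ^ (k + K')) a b ≤ r⁻¹ ^ (k + K') * r' ^ (k + K') :=
          mul_le_mul_of_nonneg_left (hbound _ (Nat.le_add_left _ _) a b) (by positivity)
      _ = t ^ (k + K') := by
          rw [htdef, ← mul_pow]
          congr 1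
          field_simp
      _ = t ^ K' * t ^ k := by rw [pow_add, mul_comm]
  obtain ⟨N0, hN0⟩ : ∃ N0 : Matrix ι ι ℝ, N0 = Matrix.of (fun a b => ∑' k, g k a b) := ⟨_, rfl⟩
  have hN0app : ∀ a b, N0 a b = ∑' k, g k a b := fun a b => by rw [hN0]; rfl
  have htel : ∀ a b, (∑' k, (g k a b - g (k + 1) a b)) = (1 : Matrix ι ι ℝ) a b := by
    intro a b
    have h1 : Summable fun k => g (k + 1) a b := (summable_nat_add_iff 1).2 (hsum a b)
    rw [Summable.tsum_sub (hsum a b) h1, Summable.tsum_eq_zero_add (hsum a b), add_sub_cancel_right]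
    simp only [hg]
    simp
  have hid1 : ((1 : Matrix ι ι ℝ) - r⁻¹ • M) * N0 = 1 := by
    ext a b
    rw [Matrix.mul_apply]
    have hterm : ∀ l, ((1 : Matrix ι ι ℝ) - r⁻¹ • M) a l * N0 l b =
        ∑' k, (((1 : Matrix ι ι ℝ) - r⁻¹ • M) a l * g k l b) := fun l => by
      rw [hN0app]; exact (tsum_mul_left).symm
    rw [Finset.sum_congr rfl (fun l _ => hterm l),
      ← Summable.tsum_finsetSum (fun l _ => (hsum l b).mul_left _)]
    have hXg : ∀ k : ℕ, (∑ l, ((1 : Matrix ι ι ℝ) - r⁻¹ • M) a l * g k l b) =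
        g k a b - g (k + 1) a b := by
      intro k
      have h6 : ((1 : Matrix ι ι ℝ) - r⁻¹ • M) * g k = g k - g (k + 1) := by
        simp only [hg]
        rw [sub_mul, one_mul, ← pow_succ']
      calc (∑ l, ((1 : Matrix ι ι ℝ) - r⁻¹ • M) a l * g k l b)
          = (((1 : Matrix ι ι ℝ) - r⁻¹ • M) * g k) a b := (Matrix.mul_apply).symm
        _ = g k a b - g (k + 1) a b := by rw [h6, Matrix.sub_apply]
    rw [tsum_congr hXg, htel a b]
  have hid2 : N0 * ((1 : Matrix ι ι ℝ) - r⁻¹ • M) = 1 := by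
    ext a b
    rw [Matrix.mul_apply]
    have hterm : ∀ l, N0 a l * ((1 : Matrix ι ι ℝ) - r⁻¹ • M) l b =
        ∑' k, (g k a l * ((1 : Matrix ι ι ℝ) - r⁻¹ • M) l b) := fun l => by
      rw [hN0app]; exact (tsum_mul_right).symm
    rw [Finset.sum_congr rfl (fun l _ => hterm l),
      ← Summable.tsum_finsetSum (fun l _ => (hsum a l).mul_right _)]
    have hXg : ∀ k : ℕ, (∑ l, g k a l * ((1 : Matrix ι ι ℝ) - r⁻¹ • M) l b) =
        g k a b - g (k + 1) a b := by
      intro k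
      have h6 : g k * ((1 : Matrix ι ι ℝ) - r⁻¹ • M) = g k - g (k + 1) := by
        simp only [hg]
        rw [mul_sub, mul_one, ← pow_succ]
      calc (∑ l, g k a l * ((1 : Matrix ι ι ℝ) - r⁻¹ • M) l b)
          = (g k * ((1 : Matrix ι ι ℝ) - r⁻¹ • M)) a b := (Matrix.mul_apply).symm
        _ = g k a b - g (k + 1) a b := by rw [h6, Matrix.sub_apply]
    rw [tsum_congr hXg, htel a b]
  have hfact : r • (1 : Matrix ι ι ℝ) - M = r • ((1 : Matrix ι ι ℝ) - r⁻¹ • M) := by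
    rw [smul_sub, smul_smul, mul_inv_cancel₀ hr.ne', one_smul]
  refine ⟨r⁻¹ • N0, ?_, ?_, ?_, ?_⟩
  · rw [hfact, Matrix.smul_mul, Matrix.mul_smul, hid1, smul_smul, mul_inv_cancel₀ hr.ne',
      one_smul]
  · rw [hfact, Matrix.smul_mul, Matrix.mul_smul, hid2, smul_smul, inv_mul_cancel₀ hr.ne',
      one_smul]
  · intro a b
    simp only [Matrix.smul_apply, smul_eq_mul, hN0app]
    exact mul_nonneg (by positivity) (tsum_nonneg fun k => hgnn k a b)
  · intro a
    have h7 : (1 : ℝ) ≤ ∑' k, g k a a := by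
      have h8 := Summable.le_tsum (hsum a a) 0 (fun k _ => hgnn k a a)
      have h9 : g 0 a a = 1 := by simp only [hg]; simp
      linarith
    calc (1 : ℝ) ≤ ∑' k, g k a a := h7
      _ = r * ((r⁻¹ • N0) a a) := by
          simp only [Matrix.smul_apply, smul_eq_mul, hN0app, ← mul_assoc,
            mul_inv_cancel₀ hr.ne', one_mul]

end Neumann


section SpecRad
variable {n : ℕ}

attribute [local instance] Matrix.linftyOpNormedAddCommGroup Matrix.linftyOpNormedRing
  Matrix.linftyOpNormedAlgebra

lemma specRad_nonneg (B : Matrix (Fin n) (Fin n) ℝ) : 0 ≤ specRad B :=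
  Real.sSup_nonneg fun x hx => by
    obtain ⟨z, _, rfl⟩ := hx
    exact norm_nonneg z

lemma abs_le_specRad (hn : 0 < n) (B : Matrix (Fin n) (Fin n) ℝ) {μ : ℂ}
    (hμ : μ ∈ spectrum ℂ (B.map Complex.ofReal)) : ‖μ‖ ≤ specRad B := by
  haveI : Nonempty (Fin n) := ⟨⟨0, hn⟩⟩
  refine le_csSup ⟨‖B.map Complex.ofReal‖ * ‖(1 : Matrix (Fin n) (Fin n) ℂ)‖, ?_⟩
    (Set.mem_image_of_mem _ hμ)
  rintro x ⟨z, hz, rfl⟩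
  by_contra hlt
  push_neg at hlt
  have h1 : ‖B.map Complex.ofReal‖ * ‖(1 : Matrix (Fin n) (Fin n) ℂ)‖ < ‖z‖ := by
    exact hlt
  exact hz (spectrum.mem_resolventSet_of_norm_lt_mul h1)

lemma spectralRadius_le_ofReal (hn : 0 < n) (B : Matrix (Fin n) (Fin n) ℝ) :
    spectralRadius ℂ (B.map Complex.ofReal) ≤ ENNReal.ofReal (specRad B) := by
  rw [spectralRadius]
  refine iSup₂_le fun μ hμ => ?_
  calc ((‖μ‖₊ : ℝ≥0∞)) = ENNReal.ofReal ‖μ‖ := by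
        rw [← enorm_eq_nnnorm, ← ofReal_norm]
    _ ≤ ENNReal.ofReal (specRad B) := ENNReal.ofReal_le_ofReal (abs_le_specRad hn B hμ)

end SpecRad

section Comb
variable {n : ℕ} {B : Matrix (Fin n) (Fin n) ℝ}

lemma crossing (hB : ∀ i j, 0 ≤ B i j)
    (hconn : ∀ i j : Fin n, Relation.ReflTransGen (fun a b => B a b ≠ 0 ∧ a ≠ b) i j)
    {x : Fin n → ℝ} (hx : ∀ i, 0 ≤ x i) {i j : Fin n} (hxi : x i = 0) (hxj : 0 < x j) :
    ∃ a, x a = 0 ∧ 0 < (B *ᵥ x) a := by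
  suffices H : ∀ a, Relation.ReflTransGen (fun a b => B a b ≠ 0 ∧ a ≠ b) a j → x a = 0 →
      ∃ a, x a = 0 ∧ 0 < (B *ᵥ x) a from H i (hconn i j) hxi
  intro a h
  induction h using Relation.ReflTransGen.head_induction_on with
  | refl => intro h0; exact absurd hxj (by rw [h0]; simp)
  | head h' hrest ih =>
    rename_i a' c
    intro ha0
    by_cases hc : x c = 0
    · exact ih hc
    · have hc' : 0 < x c := lt_of_le_of_ne (hx c) (Ne.symm hc)
      refine ⟨a', ha0, ?_⟩
      have h2 : 0 < B a' c * x c :=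
        mul_pos (lt_of_le_of_ne (hB a' c) (Ne.symm h'.1)) hc'
      have h3 : B a' c * x c ≤ ∑ l, B a' l * x l :=
        Finset.single_le_sum (f := fun l => B a' l * x l)
          (fun l _ => mul_nonneg (hB a' l) (hx l)) (Finset.mem_univ c)
      have h4 : (B *ᵥ x) a' = ∑ l, B a' l * x l := rfl
      rw [h4]
      linarith

lemma pow_one_add_mulVec_pos (hB : ∀ i j, 0 ≤ B i j)
    (hconn : ∀ i j : Fin n, Relation.ReflTransGen (fun a b => B a b ≠ 0 ∧ a ≠ b) i j)
    {x : Fin n → ℝ} (hx : ∀ i, 0 ≤ x i) (hx0 : x ≠ 0) :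
    ∀ i, 0 < ((((1 : Matrix (Fin n) (Fin n) ℝ) + B) ^ n) *ᵥ x) i := by
  classical
  set T := (1 : Matrix (Fin n) (Fin n) ℝ) + B with hT
  have hTnn : ∀ a b, 0 ≤ T a b := fun a b => by
    rw [hT, Matrix.add_apply, Matrix.one_apply]
    split <;> [linarith [hB a b]; simpa using hB a b]
  set y : ℕ → Fin n → ℝ := fun m => (T ^ m) *ᵥ x with hy
  have hynn : ∀ m i, 0 ≤ y m i := fun m i =>
    mulVec_nonneg' (entrywise_pow_nonneg hTnn m) hx i
  have hystep : ∀ m i, y (m + 1) i = y m i + (B *ᵥ y m) i := by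
    intro m i
    have h1 : (T ^ (m + 1)) *ᵥ x = T *ᵥ ((T ^ m) *ᵥ x) := by
      rw [Matrix.mulVec_mulVec, ← pow_succ']
    rw [hy]
    simp only
    rw [h1, hT, Matrix.add_mulVec, Matrix.one_mulVec]
    rfl
  set s : ℕ → Finset (Fin n) := fun m => Finset.univ.filter (fun i => 0 < y m i) with hs
  have hmem : ∀ m i, i ∈ s m ↔ 0 < y m i := by intro m i; simp [hs]
  have hsub : ∀ m, s m ⊆ s (m + 1) := by
    intro m i hi
    rw [hmem] at hi ⊢
    have h2 := mulVec_nonneg' hB (hynn m) i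
    rw [hystep]
    linarith
  have hkey : ∀ m, s m = Finset.univ ∨ m + 1 ≤ (s m).card := by
    intro m
    induction m with
    | zero =>
      right
      obtain ⟨i, hi⟩ : ∃ i, x i ≠ 0 := Function.ne_iff.1 hx0
      have hy0 : y 0 = x := by rw [hy]; simp [Matrix.one_mulVec]
      have hin : i ∈ s 0 := by
        rw [hmem, hy0]
        exact lt_of_le_of_ne (hx i) (Ne.symm hi)
      exact Finset.card_pos.2 ⟨i, hin⟩
    | succ m ih =>
      by_cases hu : s (m + 1) = Finset.univ
      · left; exact hu
      right
      rcases ih with hiu | hic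
      · exact absurd (Finset.eq_univ_of_forall fun i => hsub m (hiu ▸ Finset.mem_univ i)) hu
      · have hne : (s m).Nonempty := Finset.card_pos.1 (by omega)
        have hmu : s m ≠ Finset.univ := fun h =>
          hu (Finset.eq_univ_of_forall fun i => hsub m (h ▸ Finset.mem_univ i))
        obtain ⟨i0, hi0⟩ : ∃ i0, i0 ∉ s m := by
          by_contra hh
          push_neg at hh
          exact hmu (Finset.eq_univ_of_forall hh)
        obtain ⟨jj, hjj⟩ := hne
        have hxi0 : y m i0 = 0 := by
          have h0 : ¬0 < y m i0 := by rw [← hmem]; exact hi0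
          exact le_antisymm (not_lt.1 h0) (hynn m i0)
        have hxjj : 0 < y m jj := (hmem m jj).1 hjj
        obtain ⟨a, ha0, hapos⟩ := crossing hB hconn (hynn m) hxi0 hxjj
        have hain : a ∈ s (m + 1) := by
          rw [hmem, hystep]
          have := hynn m a
          linarith
        have hanot : a ∉ s m := by rw [hmem, ha0]; simp
        have hss : s m ⊂ s (m + 1) := (Finset.ssubset_iff_of_subset (hsub m)).2 ⟨a, hain, hanot⟩
        have := Finset.card_lt_card hss
        omega
  intro i
  have huniv : s n = Finset.univ := by
    rcases hkey n with h | h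
    · exact h
    · exfalso
      have hc := Finset.card_le_univ (s n)
      rw [Fintype.card_fin] at hc
      omega
  have hin : i ∈ s n := huniv ▸ Finset.mem_univ i
  exact (hmem n i).1 hin

end Comb

section Strict
variable {n : ℕ} {B : Matrix (Fin n) (Fin n) ℝ}

lemma specRad_strict (hn : 0 < n) (hB : ∀ i j, 0 ≤ B i j)
    (hconn : ∀ i j : Fin n, Relation.ReflTransGen (fun a b => B a b ≠ 0 ∧ a ≠ b) i j)
    {x : Fin n → ℝ} (hx : ∀ i, 0 ≤ x i) (hx0 : x ≠ 0) {i0 : Fin n} (hxi0 : x i0 = 0)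
    {c : ℝ} (hc : 0 ≤ c) (hcx : ∀ i, c * x i ≤ (B *ᵥ x) i) : c < specRad B := by
  haveI : Nonempty (Fin n) := ⟨⟨0, hn⟩⟩
  set T := ((1 : Matrix (Fin n) (Fin n) ℝ) + B) ^ n with hT
  have hTnn : ∀ a b, 0 ≤ T a b := by
    refine entrywise_pow_nonneg (fun a b => ?_) n
    rw [Matrix.add_apply, Matrix.one_apply]
    split <;> [linarith [hB a b]; simpa using hB a b]
  set w : Fin n → ℝ := fun i => (B *ᵥ x) i - c * x i with hw
  have hwnn : ∀ i, 0 ≤ w i := fun i => sub_nonneg.2 (hcx i)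
  obtain ⟨jx, hjx⟩ : ∃ jx, x jx ≠ 0 := Function.ne_iff.1 hx0
  have hjx' : 0 < x jx := lt_of_le_of_ne (hx jx) (Ne.symm hjx)
  obtain ⟨a, ha0, hapos⟩ := crossing hB hconn hx hxi0 hjx'
  have hw0 : w ≠ 0 := by
    intro hweq
    have hwa : w a = 0 := by rw [hweq]; rfl
    rw [hw] at hwa
    simp only at hwa
    rw [ha0] at hwa
    have : (B *ᵥ x) a = 0 := by linarith [hwa]
    linarith
  set z := T *ᵥ x with hz
  set d := T *ᵥ w with hd
  have hzpos : ∀ i, 0 < z i := pow_one_add_mulVec_pos hB hconn hx hx0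
  have hdpos : ∀ i, 0 < d i := pow_one_add_mulVec_pos hB hconn hwnn hw0
  have hcomm : B * T = T * B :=
    (((Commute.one_right B).add_right (Commute.refl B)).pow_right n).eq
  have hident : ∀ i, (B *ᵥ z) i - c * z i = d i := by
    have h1 : B *ᵥ z = T *ᵥ (B *ᵥ x) := by
      rw [hz, Matrix.mulVec_mulVec, hcomm, ← Matrix.mulVec_mulVec]
    have h2 : ∀ i, c * z i = (T *ᵥ (c • x)) i := by
      intro i
      rw [Matrix.mulVec_smul]
      simp [smul_eq_mul]
      exact Or.inl rfl
    have h3 : w = B *ᵥ x - c • x := by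
      funext i
      rw [hw]
      simp [smul_eq_mul]
    intro i
    rw [h1, h2, hd, h3, Matrix.mulVec_sub]
    simp
  have hune : (Finset.univ : Finset (Fin n)).Nonempty := Finset.univ_nonempty
  set zmax := Finset.univ.sup' hune z with hzmax
  have hzmaxpos : 0 < zmax :=
    lt_of_lt_of_le (hzpos (Classical.arbitrary _)) (Finset.le_sup' z (Finset.mem_univ _))
  set dmin := Finset.univ.inf' hune d with hdmin
  have hdminpos : 0 < dmin := (Finset.lt_inf'_iff _).2 fun i _ => hdpos i
  set ε := dmin / zmax with hε
  have hεpos : 0 < ε := div_pos hdminpos hzmaxpos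
  have hfin : ∀ i, (c + ε) * z i ≤ (B *ᵥ z) i := by
    intro i
    have h1 : ε * z i ≤ ε * zmax :=
      mul_le_mul_of_nonneg_left (Finset.le_sup' z (Finset.mem_univ i)) hεpos.le
    have h2 : ε * zmax = dmin := div_mul_cancel₀ _ hzmaxpos.ne'
    have h3 : dmin ≤ d i := Finset.inf'_le d (Finset.mem_univ i)
    have h4 := hident i
    have h5 : (c + ε) * z i = c * z i + ε * z i := by ring
    linarith
  have hg := gelfand_lower B hB (add_nonneg hc hεpos.le) hzpos hfin
  have h6 : ENNReal.ofReal (c + ε) ≤ ENNReal.ofReal (specRad B) :=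
    le_trans hg (spectralRadius_le_ofReal hn B)
  have h7 : c + ε ≤ specRad B := by
    rwa [ENNReal.ofReal_le_ofReal_iff (specRad_nonneg B)] at h6
  linarith

lemma submatrix_spec_lt (hn : 0 < n) (hB : ∀ i j, 0 ≤ B i j)
    (hconn : ∀ i j : Fin n, Relation.ReflTransGen (fun a b => B a b ≠ 0 ∧ a ≠ b) i j)
    (P : Fin n → Prop) [DecidablePred P] (j0 : Fin n) (hj0 : P j0) (i0 : Fin n) (hi0 : ¬P i0)
    {μ : ℂ}
    (hμ : μ ∈ spectrum ℂ ((B.submatrix (Subtype.val : {i // P i} → Fin n) (Subtype.val : {i // P i} → Fin n)).map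
      Complex.ofReal)) :
    ‖μ‖ < specRad B := by
  classical
  set Msub := B.submatrix (Subtype.val : {i // P i} → Fin n) (Subtype.val : {i // P i} → Fin n) with hMsub
  set Mc : Matrix {i // P i} {i // P i} ℂ := Msub.map Complex.ofReal with hMc
  have hdet : (algebraMap ℂ (Matrix {i // P i} {i // P i} ℂ) μ - Mc).det = (0 : ℂ) := by
    by_contra hne
    exact (spectrum.mem_iff.1 hμ) ((Matrix.isUnit_iff_isUnit_det _).2 (isUnit_iff_ne_zero.2 hne))
  obtain ⟨v, hv0, hv⟩ := (Matrix.exists_mulVec_eq_zero_iff).2 hdet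
  have hev : Mc *ᵥ v = μ • v := by
    have h1 : (algebraMap ℂ (Matrix {i // P i} {i // P i} ℂ) μ - Mc) *ᵥ v
        = μ • v - Mc *ᵥ v := by
      rw [Matrix.sub_mulVec, Algebra.algebraMap_eq_smul_one, Matrix.smul_mulVec,
        Matrix.one_mulVec]
    rw [h1] at hv
    linear_combination (norm := module) -hv
  set x : Fin n → ℝ := fun i => if h : P i then ‖v ⟨i, h⟩‖ else 0 with hx
  have hxnn : ∀ i, 0 ≤ x i := by
    intro i
    by_cases h : P i <;> simp [hx, h, norm_nonneg]
  have hx0 : x ≠ 0 := by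
    obtain ⟨b, hb⟩ : ∃ b, v b ≠ 0 := Function.ne_iff.1 hv0
    intro hxeq
    have h2 : x b.1 = 0 := by rw [hxeq]; rfl
    rw [hx] at h2
    simp only [b.2, dif_pos] at h2
    rw [Subtype.coe_eta] at h2
    exact hb (norm_eq_zero.1 h2)
  have hxi0 : x i0 = 0 := by rw [hx]; simp [hi0]
  have hcx : ∀ i, ‖μ‖ * x i ≤ (B *ᵥ x) i := by
    intro i
    by_cases hPi : P i
    · set a : {i // P i} := ⟨i, hPi⟩ with ha
      have h1 : ‖μ‖ * x i = ‖(Mc *ᵥ v) a‖ := by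
        rw [hev]
        simp only [Pi.smul_apply, smul_eq_mul, norm_mul]
        congr 1
        simp [hx, hPi]
        rfl
      have h2 : ‖(Mc *ᵥ v) a‖ ≤ ∑ b : {i // P i}, B i b.1 * x b.1 := by
        have h3 : (Mc *ᵥ v) a = ∑ b, Mc a b * v b := rfl
        rw [h3]
        refine le_trans (norm_sum_le _ _) (Finset.sum_le_sum fun b _ => ?_)
        rw [hMc, Matrix.map_apply, hMsub, Matrix.submatrix_apply, norm_mul,
          Complex.norm_real, Real.norm_eq_abs]
        have h4 : x b.1 = ‖v b‖ := by
          simp [hx, b.2, Subtype.coe_eta]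
        rw [h4, abs_of_nonneg (hB i b.1)]
      have h5 : (∑ b : {i // P i}, B i b.1 * x b.1) ≤ (B *ᵥ x) i := by
        have h6 : (B *ᵥ x) i = ∑ k, B i k * x k := rfl
        rw [h6]
        have h7 : (∑ b : {i // P i}, B i b.1 * x b.1)
            = ∑ k ∈ Finset.univ.filter P, B i k * x k :=
          (Finset.sum_subtype (Finset.univ.filter P) (fun k => by simp)
            (fun k => B i k * x k)).symm
        rw [h7]
        refine Finset.sum_le_sum_of_subset_of_nonneg (Finset.filter_subset _ _) ?_
        intro k _ _
        exact mul_nonneg (hB i k) (hxnn k)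
      calc ‖μ‖ * x i = ‖(Mc *ᵥ v) a‖ := h1
        _ ≤ ∑ b : {i // P i}, B i b.1 * x b.1 := h2
        _ ≤ (B *ᵥ x) i := h5
    · have h1 : x i = 0 := by rw [hx]; simp [hPi]
      rw [h1, mul_zero]
      exact mulVec_nonneg' hB hxnn i
  exact specRad_strict hn hB hconn hxnn hx0 hxi0 (norm_nonneg μ) hcx

end Strict

theorem fsai_upper_nonneg_invertible (n : ℕ) (hn : 2 ≤ n)
    (A : Matrix (Fin n) (Fin n) ℝ)
    (hA : IsSingularMMatrix A) (hirr : IsIrreducibleMatrix A)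
    (S : Set (Fin n × Fin n))
    (hS1 : S ⊆ {p : Fin n × Fin n | p.1 ≤ p.2})
    (hS2 : ∀ i : Fin n, (i, i) ∈ S)
    (hS3 : ((⟨n - 2, by omega⟩ : Fin n), (⟨n - 1, by omega⟩ : Fin n)) ∉ S)
    (U : Matrix (Fin n) (Fin n) ℝ) (hU : IsFSAIUpperFactor A U S) :
    (∀ i j, 0 ≤ U i j) ∧ IsUnit U := by

  classical
  have hn0 : 0 < n := by omega
  obtain ⟨hZ, B, hB, hAeq⟩ := hA
  set r := specRad B with hrdef
  -- off-diagonal relation between A and B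
  have hoff : ∀ a b : Fin n, a ≠ b → B a b = -A a b := by
    intro a b hab
    rw [hAeq]
    simp [Matrix.sub_apply, Matrix.smul_apply, Matrix.one_apply_ne hab]
  -- connectivity for B
  have hconn : ∀ i j : Fin n, Relation.ReflTransGen (fun a b => B a b ≠ 0 ∧ a ≠ b) i j := by
    intro i j
    have h := hirr i j
    induction h with
    | refl => exact Relation.ReflTransGen.refl
    | tail hbc hstep ih =>
      rename_i b c
      by_cases hbceq : b = c
      · exact hbceq ▸ ih
      · exact ih.tail ⟨by rw [hoff b c hbceq]; simpa using hstep, hbceq⟩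
  -- positivity of r
  have hr0 : 0 < r := by
    have hx : ∀ i : Fin n, (0:ℝ) ≤ (fun k : Fin n => if k = ⟨0, by omega⟩ then (1:ℝ) else 0) i := by
      intro i; by_cases h : i = (⟨0, by omega⟩ : Fin n) <;> simp [h]
    refine specRad_strict hn0 hB hconn hx ?_ (i0 := ⟨1, by omega⟩) ?_ le_rfl ?_
    · intro heq
      have := congrFun heq ⟨0, by omega⟩
      simp at this
    · have : (⟨1, by omega⟩ : Fin n) ≠ ⟨0, by omega⟩ := by
        intro h; exact absurd (congrArg Fin.val h) (by norm_num)
      simp [this]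
    · intro i
      rw [zero_mul]
      exact mulVec_nonneg' hB
        (fun k => by by_cases h : k = (⟨0, by omega⟩ : Fin n) <;> simp [h]) i
  -- key per-column fact
  have key : ∀ j : Fin n, (∀ i, 0 ≤ U i j) ∧ 0 < U j j := by
    intro j
    set P : Fin n → Prop := fun i => (i, j) ∈ S with hP
    haveI : DecidablePred P := Classical.decPred _
    haveI : Nonempty {i // P i} := ⟨⟨j, hS2 j⟩⟩
    set jj : {i // P i} := ⟨j, hS2 j⟩ with hjj
    obtain ⟨i0, hi0⟩ : ∃ i0 : Fin n, ¬ P i0 := by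
      by_cases hj : (j : ℕ) = n - 1
      · refine ⟨⟨n - 2, by omega⟩, fun hmem => hS3 ?_⟩
        have hje : j = (⟨n - 1, by omega⟩ : Fin n) := by
          apply Fin.ext; simpa using hj
        rw [hP] at hmem
        rwa [hje] at hmem
      · refine ⟨⟨n - 1, by omega⟩, fun hmem => ?_⟩
        rw [hP] at hmem
        have h1 := hS1 hmem
        simp only [Set.mem_setOf_eq] at h1
        have h2 : n - 1 ≤ (j : ℕ) := h1
        have h3 : (j : ℕ) < n := j.isLt
        omega
    set Msub := B.submatrix (Subtype.val : {i // P i} → Fin n)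
      (Subtype.val : {i // P i} → Fin n) with hMsub
    have hMnn : ∀ a b, 0 ≤ Msub a b := fun a b => hB a.1 b.1
    have hspec : ∀ μ ∈ spectrum ℂ (Msub.map Complex.ofReal), ‖μ‖ < r :=
      fun μ hμ => submatrix_spec_lt hn0 hB hconn P j (hS2 j) i0 hi0 hμ
    obtain ⟨N, hN1, hN2, hNnn, hNdiag⟩ := neumann_inverse Msub hMnn hr0 hspec
    set C := A.submatrix (Subtype.val : {i // P i} → Fin n)
      (Subtype.val : {i // P i} → Fin n) with hC
    have hCM : C = r • (1 : Matrix {i // P i} {i // P i} ℝ) - Msub := by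
      ext a b
      rw [hC, Matrix.submatrix_apply, hAeq, Matrix.sub_apply, Matrix.sub_apply,
        Matrix.smul_apply, Matrix.smul_apply, hMsub, Matrix.submatrix_apply]
      congr 1
      by_cases hab : a = b
      · rw [hab, Matrix.one_apply_eq, Matrix.one_apply_eq]
      · rw [Matrix.one_apply_ne hab, Matrix.one_apply_ne (fun h => hab (Subtype.ext h))]
    set u : {i // P i} → ℝ := fun a => U a.1 j with hu
    set e : {i // P i} → ℝ := fun a => if a = jj then 1 else 0 with he
    have hCu : C *ᵥ u = e := by
      funext a
      have h1 : (C *ᵥ u) a = ∑ b : {i // P i}, A a.1 b.1 * U b.1 j := rfl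
      have h2 : (∑ b : {i // P i}, A a.1 b.1 * U b.1 j)
          = ∑ k ∈ Finset.univ.filter P, A a.1 k * U k j :=
        (Finset.sum_subtype (Finset.univ.filter P) (fun k => by simp)
          (fun k => A a.1 k * U k j)).symm
      have h3 : (∑ k ∈ Finset.univ.filter P, A a.1 k * U k j)
          = ∑ k : Fin n, A a.1 k * U k j := by
        refine Finset.sum_subset (Finset.filter_subset _ _) ?_
        intro k _ hk
        have hkP : ¬ P k := by simpa using hk
        rw [hU.2.1 (k, j) hkP, mul_zero]
      have h4 : (∑ k : Fin n, A a.1 k * U k j) = (A * U) a.1 j := (Matrix.mul_apply).symm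
      have h5 : (A * U) a.1 j = if a.1 = j then 1 else 0 := hU.2.2 (a.1, j) a.2
      rw [h1, h2, h3, h4, h5]
      by_cases haj : a = jj
      · have haj1 : a.1 = j := by rw [haj]
        rw [he]; simp [haj, haj1]; rfl
      · have haj1 : a.1 ≠ j := fun h => haj (Subtype.ext h)
        rw [he]; simp [haj, haj1]
    have hNC : N * C = 1 := by rw [hCM]; exact hN2
    have h6 : u = N *ᵥ e := by
      rw [← hCu, Matrix.mulVec_mulVec, hNC, Matrix.one_mulVec]
    have huN : ∀ a, u a = N a jj := by
      intro a
      rw [h6]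
      have : (N *ᵥ e) a = ∑ b, N a b * e b := rfl
      rw [this, he]
      simp [mul_ite, Finset.sum_ite_eq']
    constructor
    · intro i
      by_cases hPi : P i
      · have h7 : U i j = u ⟨i, hPi⟩ := rfl
        rw [h7, huN]
        exact hNnn _ jj
      · rw [hU.2.1 (i, j) hPi]
    · have h8 : U j j = N jj jj := huN jj
      have h9 := hNdiag jj
      nlinarith [hr0]
  refine ⟨fun i j => (key j).1 i, ?_⟩
  have hdet : U.det = ∏ i, U i i :=
    Matrix.det_of_upperTriangular (fun i j hij => hU.1 i j hij)
  rw [Matrix.isUnit_iff_isUnit_det, hdet]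
  exact isUnit_iff_ne_zero.2 (ne_of_gt (Finset.prod_pos fun i _ => (key i).2))
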